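/- The stabilizer α-Rényi entropy of n copies of the magic state satisfies M_α(|H⟩^{⊗n}) = n·(1-α)^{-1}·( log₂(2^{1-α} + 1) − 1 ) (in base-2 logarithm), obtained from M_α = (1-α)^{-1} log Σ_{k=0}^{n} C(n,k) 2^k 2^{-α(n+k)} − n. -/

import Mathlib

open Matrix BigOperators

/-- The four single-qubit Pauli matrices I, X, Y, Z. -/
noncomputable def pauli : Fin 4 → Matrix (Fin 2) (Fin 2) ℂ :=
  ![1, !![0, 1; 1, 0], !![0, -Complex.I; Complex.I, 0], !![1, 0; 0, -1]]

/-- The n-qubit Pauli string labelled by a : Fin n → Fin 4, acting on (ℂ²)^⊗n realized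
as functions (Fin n → Fin 2) → ℂ; its (x,y) entry is the product of single-qubit entries. -/
noncomputable def PauliString (n : ℕ) (a : Fin n → Fin 4) :
    Matrix (Fin n → Fin 2) (Fin n → Fin 2) ℂ :=
  Matrix.of fun x y => ∏ j, pauli (a j) (x j) (y j)


/-- The single-qubit magic state |H⟩ = (|0⟩ + e^{iπ/4}|1⟩)/√2. -/
noncomputable def Hstate : Fin 2 → ℂ :=
  ![(1 : ℂ) / Real.sqrt 2, Complex.exp (Complex.I * (Real.pi / 4)) / Real.sqrt 2]

/-- The n-fold tensor power |H⟩^{⊗n}. -/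
noncomputable def HTensor (n : ℕ) : (Fin n → Fin 2) → ℂ :=
  fun x => ∏ j, Hstate (x j)

/-- Ξ_P(|H⟩^{⊗n}) = d⁻¹ ⟨H|^{⊗n} P |H⟩^{⊗n}², the squared (normalized) Pauli
expectation of the n-fold magic state (the expectations are real, so the square
is the norm-square). -/
noncomputable def XiH (n : ℕ) (a : Fin n → Fin 4) : ℝ :=
  ((2 : ℝ) ^ n)⁻¹ *
    Complex.normSq (star (HTensor n) ⬝ᵥ (PauliString n a).mulVec (HTensor n))

/- ### Auxiliary lemmas -/

lemma key_exchange {n : ℕ} (f : Fin n → Fin 2 → Fin 2 → ℂ) :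
    ∑ x : Fin n → Fin 2, ∑ y : Fin n → Fin 2, ∏ j, f j (x j) (y j)
      = ∏ j, ∑ u : Fin 2, ∑ v : Fin 2, f j u v := by
  have h1 : ∀ j, (∑ u : Fin 2, ∑ v : Fin 2, f j u v)
      = ∑ p : Fin 2 × Fin 2, f j p.1 p.2 :=
    fun j => (Fintype.sum_prod_type' (f := fun x y => f j x y)).symm
  have h2 : (∏ j, ∑ p : Fin 2 × Fin 2, f j p.1 p.2)
      = ∑ g ∈ Fintype.piFinset (fun _ : Fin n => (Finset.univ : Finset (Fin 2 × Fin 2))),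
          ∏ j, f j (g j).1 (g j).2 := Finset.prod_univ_sum _ _
  rw [Finset.prod_congr rfl (fun j _ => h1 j), h2, Fintype.piFinset_univ,
    ← Fintype.sum_prod_type']
  exact (Fintype.sum_equiv (Equiv.arrowProdEquivProdArrow (Fin n) (fun _ => Fin 2) (fun _ => Fin 2))
    _ _ (fun g => rfl)).symm

lemma factorize (n : ℕ) (a : Fin n → Fin 4) :
    star (HTensor n) ⬝ᵥ (PauliString n a).mulVec (HTensor n)
      = ∏ j, (star Hstate ⬝ᵥ (pauli (a j)).mulVec Hstate) := by
  simp only [dotProduct, mulVec, PauliString, HTensor, Pi.star_apply, Matrix.of_apply,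
    star_prod]
  simp_rw [Finset.mul_sum, ← Finset.prod_mul_distrib]
  rw [key_exchange (fun j u v => star (Hstate u) * (pauli (a j) u v * Hstate v))]

/-- The squared single-qubit Pauli expectations on |H⟩. -/
noncomputable def w : Fin 4 → ℝ := ![1, 1/2, 1/2, 0]

lemma normSq_e (i : Fin 4) :
    Complex.normSq (star Hstate ⬝ᵥ (pauli i).mulVec Hstate) = w i := by
  set c : ℂ := Complex.exp (Complex.I * (Real.pi / 4)) with hcdef
  have hπ : Complex.I * ((Real.pi : ℂ) / 4) = ((Real.pi / 4 : ℝ) : ℂ) * Complex.I := by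
    push_cast; ring
  have hre : c.re = Real.sqrt 2 / 2 := by
    rw [hcdef, hπ, Complex.exp_ofReal_mul_I_re, Real.cos_pi_div_four]
  have him : c.im = Real.sqrt 2 / 2 := by
    rw [hcdef, hπ, Complex.exp_ofReal_mul_I_im, Real.sin_pi_div_four]
  have h2 : Real.sqrt 2 ^ 2 = 2 := Real.sq_sqrt (by norm_num)
  have hs0 : ((Real.sqrt 2 : ℝ) : ℂ) ≠ 0 := by simp [Real.sqrt_eq_zero']
  have hcc : (starRingEnd ℂ) c * c = 1 := by
    rw [mul_comm, Complex.mul_conj, Complex.normSq_apply, hre, him]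
    norm_cast; nlinarith [h2]
  have hsC : ((Real.sqrt 2 : ℝ) : ℂ) * ((Real.sqrt 2 : ℝ) : ℂ) = 2 := by
    norm_cast; nlinarith [h2]
  have hsum : (starRingEnd ℂ) c + c = (Real.sqrt 2 : ℂ) := by
    apply Complex.ext <;> simp [hre, him]
  have hdiff : Complex.I * ((starRingEnd ℂ) c - c) = (Real.sqrt 2 : ℂ) := by
    apply Complex.ext <;> simp [hre, him]
  have hhalf : Complex.normSq ((Real.sqrt 2 : ℂ) / 2) = 1 / 2 := by
    rw [show ((Real.sqrt 2 : ℝ) : ℂ) / 2 = ((Real.sqrt 2 / 2 : ℝ) : ℂ) by push_cast; ring,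
      Complex.normSq_ofReal]
    nlinarith [h2]
  have simp1 : ∀ M : Matrix (Fin 2) (Fin 2) ℂ,
      star Hstate ⬝ᵥ M.mulVec Hstate =
        (starRingEnd ℂ) (1 / ↑(Real.sqrt 2)) *
            (M 0 0 * (1 / ↑(Real.sqrt 2)) + M 0 1 * (c / ↑(Real.sqrt 2)))
        + (starRingEnd ℂ) (c / ↑(Real.sqrt 2)) *
            (M 1 0 * (1 / ↑(Real.sqrt 2)) + M 1 1 * (c / ↑(Real.sqrt 2))) := by
    intro M
    simp [Hstate, dotProduct, mulVec, Fin.sum_univ_two, ← hcdef]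
  fin_cases i
  · show Complex.normSq (star Hstate ⬝ᵥ (pauli 0).mulVec Hstate) = w 0
    rw [show pauli 0 = 1 from rfl, simp1]
    rw [show ((1:Matrix (Fin 2) (Fin 2) ℂ) 0 0 * (1 / ↑(Real.sqrt 2))
        + (1:Matrix (Fin 2) (Fin 2) ℂ) 0 1 * (c / ↑(Real.sqrt 2))) = 1 / ↑(Real.sqrt 2) by
        simp [Matrix.one_apply]]
    rw [show ((1:Matrix (Fin 2) (Fin 2) ℂ) 1 0 * (1 / ↑(Real.sqrt 2))
        + (1:Matrix (Fin 2) (Fin 2) ℂ) 1 1 * (c / ↑(Real.sqrt 2))) = c / ↑(Real.sqrt 2) by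
        simp [Matrix.one_apply]]
    rw [show (starRingEnd ℂ) (1 / ↑(Real.sqrt 2)) * (1 / ↑(Real.sqrt 2))
        + (starRingEnd ℂ) (c / ↑(Real.sqrt 2)) * (c / ↑(Real.sqrt 2)) = 1 from by
      simp only [map_div₀, _root_.map_one, Complex.conj_ofReal, div_mul_div_comm, one_mul,
        hcc, hsC]
      norm_num]
    simp [w]
  · show Complex.normSq (star Hstate ⬝ᵥ (pauli 1).mulVec Hstate) = w 1
    have he : star Hstate ⬝ᵥ (pauli 1).mulVec Hstate = ↑(Real.sqrt 2) / 2 := by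
      rw [show pauli 1 = !![0, 1; 1, 0] from rfl, simp1]
      simp only [Matrix.cons_val', Matrix.cons_val_zero, Matrix.cons_val_one, Matrix.head_cons,
        Matrix.empty_val', Matrix.cons_val_fin_one, Matrix.head_fin_const, Matrix.of_apply,
        zero_mul, one_mul, mul_one, zero_add, add_zero, map_div₀, _root_.map_one,
        Complex.conj_ofReal, div_mul_div_comm, hsC]
      rw [← add_div, add_comm, hsum]
    rw [he, hhalf]; simp [w]
  · show Complex.normSq (star Hstate ⬝ᵥ (pauli 2).mulVec Hstate) = w 2
    have he : star Hstate ⬝ᵥ (pauli 2).mulVec Hstate = ↑(Real.sqrt 2) / 2 := by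
      rw [show pauli 2 = !![0, -Complex.I; Complex.I, 0] from rfl, simp1]
      simp only [Matrix.cons_val', Matrix.cons_val_zero, Matrix.cons_val_one, Matrix.head_cons,
        Matrix.empty_val', Matrix.cons_val_fin_one, Matrix.head_fin_const, Matrix.of_apply,
        zero_mul, one_mul, mul_one, zero_add, add_zero, map_div₀, _root_.map_one,
        Complex.conj_ofReal, div_mul_div_comm, hsC]
      field_simp
      linear_combination 2 * hdiff
        - (Real.sqrt 2 : ℂ) * hsC
    rw [he, hhalf]; simp [w]
  · show Complex.normSq (star Hstate ⬝ᵥ (pauli 3).mulVec Hstate) = w 3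
    have he : star Hstate ⬝ᵥ (pauli 3).mulVec Hstate = 0 := by
      rw [show pauli 3 = !![1, 0; 0, -1] from rfl, simp1]
      simp only [Matrix.cons_val', Matrix.cons_val_zero, Matrix.cons_val_one, Matrix.head_cons,
        Matrix.empty_val', Matrix.cons_val_fin_one, Matrix.head_fin_const, Matrix.of_apply,
        zero_mul, one_mul, mul_one, zero_add, add_zero, map_div₀, _root_.map_one,
        Complex.conj_ofReal, div_mul_div_comm, hsC]
      field_simp
      linear_combination hsC - 2 * hcc
    rw [he]; simp [w]

lemma XiH_eq (n : ℕ) (a : Fin n → Fin 4) :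
    XiH n a = ((2 : ℝ) ^ n)⁻¹ * ∏ j, w (a j) := by
  rw [XiH, factorize, map_prod Complex.normSq]
  congr 1
  exact Finset.prod_congr rfl fun j _ => normSq_e (a j)

lemma w_nonneg (i : Fin 4) : 0 ≤ w i := by
  fin_cases i <;> norm_num [w]

lemma sum_pow (n : ℕ) (α : ℝ) (hα : 0 < α) :
    ∑ a : Fin n → Fin 4, (XiH n a) ^ α
      = (2 : ℝ) ^ (-(α * n)) * ((2 : ℝ) ^ (1 - α) + 1) ^ n := by
  have hterm : ∀ a : Fin n → Fin 4,
      (XiH n a) ^ α = (2 : ℝ) ^ (-(α * n)) * ∏ j, w (a j) ^ α := by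
    intro a
    rw [XiH_eq, Real.mul_rpow (by positivity)
      (Finset.prod_nonneg fun j _ => w_nonneg _)]
    congr 1
    · rw [← Real.rpow_natCast 2 n, ← Real.rpow_neg (by norm_num),
        ← Real.rpow_mul (by norm_num : (0:ℝ) ≤ 2)]
      rw [show -(n:ℝ) * α = -(α * n) by ring]
    · exact (Real.finset_prod_rpow _ _ (fun j _ => w_nonneg _) _).symm
  simp_rw [hterm]
  rw [← Finset.mul_sum]
  congr 1
  have hS : (∑ i : Fin 4, w i ^ α) = (2 : ℝ) ^ (1 - α) + 1 := by
    rw [Fin.sum_univ_four]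
    have h0 : w 0 = 1 := rfl
    have h1 : w 1 = 1/2 := rfl
    have h2 : w 2 = 1/2 := rfl
    have h3 : w 3 = 0 := rfl
    rw [h0, h1, h2, h3, Real.one_rpow, Real.zero_rpow hα.ne']
    have hhalf : ((1:ℝ)/2) ^ α = (2:ℝ) ^ (-α) := by
      rw [one_div, ← Real.rpow_neg_one 2, ← Real.rpow_mul (by norm_num)]
      ring_nf
    have h1a : (2:ℝ) ^ (1 - α) = 2 * (2:ℝ) ^ (-α) := by
      rw [show (1 : ℝ) - α = 1 + (-α) by ring, Real.rpow_add (by norm_num),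
        Real.rpow_one]
    rw [hhalf, h1a]; ring
  have : (∑ a : Fin n → Fin 4, ∏ j, w (a j) ^ α)
      = ∏ _j : Fin n, ∑ i : Fin 4, w i ^ α := by
    rw [Finset.prod_univ_sum, Fintype.piFinset_univ]
  rw [this, hS, Finset.prod_const, Finset.card_univ, Fintype.card_fin]

lemma binom_sum (n : ℕ) (α : ℝ) :
    ∑ k ∈ Finset.range (n + 1), (n.choose k : ℝ) * 2 ^ k * (2 : ℝ) ^ (-(α * (n + k)))
      = (2 : ℝ) ^ (-(α * n)) * ((2 : ℝ) ^ (1 - α) + 1) ^ n := by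
  rw [add_pow, Finset.mul_sum]
  apply Finset.sum_congr rfl
  intro k hk
  have e1 : (2:ℝ) ^ (-(α * ((n:ℝ) + (k:ℝ)))) = (2:ℝ) ^ (-(α * (n:ℝ))) * (2:ℝ) ^ (-(α * (k:ℝ))) := by
    rw [← Real.rpow_add (by norm_num)]; ring_nf
  have e2 : ((2:ℝ) ^ ((1:ℝ) - α)) ^ k = (2:ℝ) ^ k * (2:ℝ) ^ (-(α * (k:ℝ))) := by
    rw [← Real.rpow_natCast ((2:ℝ) ^ ((1:ℝ) - α)) k, ← Real.rpow_mul (by norm_num : (0:ℝ) ≤ 2),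
      show ((1:ℝ) - α) * (k:ℝ) = (k:ℝ) + (-(α * (k:ℝ))) by ring,
      Real.rpow_add (by norm_num), Real.rpow_natCast]
  rw [e1, e2, one_pow]
  ring

theorem stmt_7 (n : ℕ) (α : ℝ) (hα : 0 < α) (hα1 : α ≠ 1) :
    (1 - α)⁻¹ * Real.logb 2 (∑ a : Fin n → Fin 4, (XiH n a) ^ α) - n =
      (1 - α)⁻¹ * Real.logb 2 (∑ k ∈ Finset.range (n + 1),
        (n.choose k : ℝ) * 2 ^ k * (2 : ℝ) ^ (-(α * (n + k)))) - n ∧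
    (1 - α)⁻¹ * Real.logb 2 (∑ a : Fin n → Fin 4, (XiH n a) ^ α) - n =
      n * ((1 - α)⁻¹ * (Real.logb 2 ((2 : ℝ) ^ (1 - α) + 1) - 1)) := by
  have h1α : (1:ℝ) - α ≠ 0 := sub_ne_zero.mpr (fun h => hα1 h.symm)
  have hB : (0:ℝ) < (2:ℝ) ^ ((1:ℝ) - α) + 1 := by positivity
  constructor
  · rw [sum_pow n α hα, binom_sum]
  · rw [sum_pow n α hα,
      Real.logb_mul (ne_of_gt (Real.rpow_pos_of_pos (by norm_num) _)) (by positivity),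
      Real.logb_rpow (by norm_num) (by norm_num), Real.logb_pow]
    field_simp
    ring
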